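/- Let X be a linear subspace of ℝⁿ, let A ∈ S₊(X) be a matrix of rank r ≥ 1, and let Q be an n×n real symmetric matrix. Then there exist a₁, …, a_r ∈ X such that A = ∑_{i=1}^r aᵢaᵢᵀ and aᵢᵀQaᵢ = ⟨A, Q⟩ / r for every i = 1, …, r. -/

import Mathlib

open Matrix
open scoped Pointwise

noncomputable section

/-- Frobenius inner product on real `n × n` matrices:
`⟨A,B⟩ = ∑ᵢⱼ Aᵢⱼ Bᵢⱼ`. -/
def mip {n : ℕ} (A B : Matrix (Fin n) (Fin n) ℝ) : ℝ :=
  ∑ i, ∑ j, A i j * B i j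

/-- `CPset S` (also used for `S₊(X)` when `S` is a subspace): the set of matrices of the
form `∑ᵢ aᵢaᵢᵀ` for a positive number of vectors `aᵢ ∈ S`. -/
def CPset {n : ℕ} (S : Set (Fin n → ℝ)) : Set (Matrix (Fin n) (Fin n) ℝ) :=
  {A | ∃ k : ℕ, 0 < k ∧ ∃ f : Fin k → (Fin n → ℝ),
        (∀ i, f i ∈ S) ∧ A = ∑ i, Matrix.vecMulVec (f i) (f i)}

/-- `COPset K`: symmetric matrices `A` with `xᵀAx ≥ 0` for all `x ∈ K`. -/
def COPset {n : ℕ} (K : Set (Fin n → ℝ)) : Set (Matrix (Fin n) (Fin n) ℝ) :=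
  {A | A.IsSymm ∧ ∀ x ∈ K, 0 ≤ x ⬝ᵥ A.mulVec x}

/-- `F` is a face of the convex cone `C`: a nonempty convex subcone such that
`a, b ∈ C`, `a + b ∈ F` imply `a, b ∈ F`. -/
def IsFaceOf {M : Type*} [AddCommMonoid M] [Module ℝ M] (C F : Set M) : Prop :=
  F.Nonempty ∧ F ⊆ C ∧ Convex ℝ F ∧ (∀ x ∈ F, ∀ c : ℝ, 0 ≤ c → c • x ∈ F) ∧
    ∀ a ∈ C, ∀ b ∈ C, a + b ∈ F → a ∈ F ∧ b ∈ F

/-- Exposed face of a cone of matrices (w.r.t. the trace inner product). -/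
def IsExposedFaceOf {n : ℕ} (C F : Set (Matrix (Fin n) (Fin n) ℝ)) : Prop :=
  IsFaceOf C F ∧ ∃ H : Matrix (Fin n) (Fin n) ℝ,
    (∀ A ∈ C, 0 ≤ mip H A) ∧ F = {A ∈ C | mip H A = 0}

/-- Dimension of a set: dimension of its linear span. -/
def setDim {M : Type*} [AddCommGroup M] [Module ℝ M] (S : Set M) : ℕ :=
  Module.finrank ℝ (Submodule.span ℝ S)

/-- The ray `ℝ₊ • x`. -/
def rayOf {M : Type*} [AddCommMonoid M] [Module ℝ M] (x : M) : Set M :=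
  {y | ∃ c : ℝ, 0 ≤ c ∧ y = c • x}

/-- An extreme ray: a one-dimensional face. -/
def IsExtremeRayOf {M : Type*} [AddCommGroup M] [Module ℝ M] (C F : Set M) : Prop :=
  IsFaceOf C F ∧ setDim F = 1

/-- The second-order cone `L^{m+1} = {x : x₀ ≥ ‖(x₁,…,xₘ)‖}`. -/
def soc (m : ℕ) : Set (Fin (m+1) → ℝ) :=
  {x | Real.sqrt (∑ i : Fin m, x i.succ ^ 2) ≤ x 0}

/-- The boundary `∂L^{m+1} = {x : x₀ = ‖(x₁,…,xₘ)‖}`. -/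
def socBd (m : ℕ) : Set (Fin (m+1) → ℝ) :=
  {x | Real.sqrt (∑ i : Fin m, x i.succ ^ 2) = x 0}

/-- The interior `int L^{m+1} = {x : x₀ > ‖(x₁,…,xₘ)‖}`. -/
def socInt (m : ℕ) : Set (Fin (m+1) → ℝ) :=
  {x | Real.sqrt (∑ i : Fin m, x i.succ ^ 2) < x 0}

/-- The matrix `J = diag(1, −1, …, −1)`. -/
def Jmat (m : ℕ) : Matrix (Fin (m+1)) (Fin (m+1)) ℝ :=
  Matrix.diagonal fun i => if i = 0 then 1 else -1

/-- The hyperplane `{x : x ⬝ u = 0}` as a submodule. -/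
def perpHyp {n : ℕ} (u : Fin n → ℝ) : Submodule ℝ (Fin n → ℝ) where
  carrier := {x | x ⬝ᵥ u = 0}
  add_mem' := by
    intro a b ha hb
    simp only [Set.mem_setOf_eq, add_dotProduct] at *
    linarith
  zero_mem' := by simp [zero_dotProduct]
  smul_mem' := by
    intro c a ha
    simp only [Set.mem_setOf_eq, smul_dotProduct] at *
    simp [ha]

/-- A polyhedral cone: nonnegative combinations of finitely many vectors. -/
def IsPolyhedralCone {M : Type*} [AddCommMonoid M] [Module ℝ M] (S : Set M) : Prop :=
  ∃ (k : ℕ) (g : Fin k → M),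
    S = {x | ∃ c : Fin k → ℝ, (∀ i, 0 ≤ c i) ∧ x = ∑ i, c i • g i}

end


section helpers
open Matrix Real

variable {n : ℕ}

private lemma vmv_mulVec (u v x : Fin n → ℝ) :
    (vecMulVec u v) *ᵥ x = (v ⬝ᵥ x) • u := by
  ext p
  simp only [mulVec, dotProduct, vecMulVec_apply, Pi.smul_apply, smul_eq_mul, Finset.sum_mul]
  exact Finset.sum_congr rfl fun q _ => by ring

private lemma mip_add_left (A B Q : Matrix (Fin n) (Fin n) ℝ) :
    mip (A + B) Q = mip A Q + mip B Q := by
  simp [mip, Matrix.add_apply, add_mul, Finset.sum_add_distrib]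

private lemma mip_sum_left {k : ℕ} (f : Fin k → Matrix (Fin n) (Fin n) ℝ)
    (Q : Matrix (Fin n) (Fin n) ℝ) :
    mip (∑ i, f i) Q = ∑ i, mip (f i) Q := by
  simp only [mip, Matrix.sum_apply, Finset.sum_mul]
  calc ∑ p : Fin n, ∑ q : Fin n, ∑ i : Fin k, f i p q * Q p q
      = ∑ p : Fin n, ∑ i : Fin k, ∑ q : Fin n, f i p q * Q p q :=
        Finset.sum_congr rfl fun p _ => Finset.sum_comm
    _ = ∑ i, ∑ p, ∑ q, f i p q * Q p q := Finset.sum_comm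

private lemma mip_vecMulVec (x : Fin n → ℝ) (Q : Matrix (Fin n) (Fin n) ℝ) :
    mip (vecMulVec x x) Q = x ⬝ᵥ Q *ᵥ x := by
  simp only [mip, vecMulVec_apply, dotProduct, mulVec, Finset.mul_sum]
  exact Finset.sum_congr rfl fun p _ => Finset.sum_congr rfl fun q _ => by ring

private lemma smul_vmv (a : ℝ) (x : Fin n → ℝ) :
    vecMulVec (a • x) (a • x) = (a * a) • vecMulVec x x := by
  ext p q
  simp only [vecMulVec_apply, Pi.smul_apply, smul_eq_mul, Matrix.smul_apply]
  ring

private lemma rot_vmv (u v : Fin n → ℝ) (θ : ℝ) :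
    vecMulVec (Real.cos θ • u + Real.sin θ • v) (Real.cos θ • u + Real.sin θ • v)
      + vecMulVec ((-Real.sin θ) • u + Real.cos θ • v) ((-Real.sin θ) • u + Real.cos θ • v)
      = vecMulVec u u + vecMulVec v v := by
  ext p q
  have h := Real.sin_sq_add_cos_sq θ
  simp only [Matrix.add_apply, vecMulVec_apply, Pi.add_apply, Pi.smul_apply, smul_eq_mul,
    neg_mul]
  linear_combination (u p * u q + v p * v q) * h

private lemma cont_quad (Q : Matrix (Fin n) (Fin n) ℝ) (u v : Fin n → ℝ) :
    Continuous fun θ : ℝ =>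
      (Real.cos θ • u + Real.sin θ • v) ⬝ᵥ Q *ᵥ (Real.cos θ • u + Real.sin θ • v) := by
  simp only [dotProduct, mulVec, Pi.add_apply, Pi.smul_apply, smul_eq_mul]
  fun_prop

/-- Equalization lemma: any rank-one decomposition with vectors in `X` can be rearranged so
that all vectors have the same `Q`-value. -/
private lemma equalize (X : Submodule ℝ (Fin n → ℝ)) (Q : Matrix (Fin n) (Fin n) ℝ) :
    ∀ r : ℕ, ∀ c : Fin (r+1) → (Fin n → ℝ), (∀ i, c i ∈ X) →
      ∃ a : Fin (r+1) → (Fin n → ℝ), (∀ i, a i ∈ X) ∧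
        (∑ i, vecMulVec (a i) (a i)) = (∑ i, vecMulVec (c i) (c i)) ∧
        ∀ i, (a i) ⬝ᵥ Q *ᵥ (a i) = (∑ j, (c j) ⬝ᵥ Q *ᵥ (c j)) / (r+1 : ℝ) := by
  intro r
  induction r with
  | zero =>
    intro c hc
    refine ⟨c, hc, rfl, fun i => ?_⟩
    have : i = 0 := Fin.ext (by omega)
    subst this
    simp [Fin.sum_univ_one]
  | succ r ih =>
    intro c hc
    set f : Fin (r+2) → ℝ := fun i => (c i) ⬝ᵥ Q *ᵥ (c i) with hf
    set T : ℝ := ∑ j, f j with hT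
    set m : ℝ := T / (r+2 : ℝ) with hm
    have hr2 : ((r:ℝ)+2) ≠ 0 := by positivity
    have hTm : T = ((r:ℝ)+2) * m := by
      rw [hm]; field_simp
    -- find i, j with i ≠ j, f i ≤ m ≤ f j
    have hconst : ∑ _j : Fin (r+2), m = ((r:ℝ)+2) * m := by
      rw [Finset.sum_const, Finset.card_univ, Fintype.card_fin, nsmul_eq_mul]
      push_cast
      ring
    have hpair : ∃ i j, i ≠ j ∧ f i ≤ m ∧ m ≤ f j := by
      have hlow : ∃ i, f i ≤ m := by
        have hle : ∑ j, f j ≤ ∑ _j : Fin (r+2), m := by rw [hconst, ← hTm]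
        obtain ⟨i, _, hi⟩ := Finset.exists_le_of_sum_le Finset.univ_nonempty hle
        exact ⟨i, hi⟩
      have hhigh : ∃ j, m ≤ f j := by
        have hle : ∑ _j : Fin (r+2), m ≤ ∑ j, f j := by rw [hconst, ← hTm]
        obtain ⟨j, _, hj⟩ := Finset.exists_le_of_sum_le Finset.univ_nonempty hle
        exact ⟨j, hj⟩
      obtain ⟨i, hi⟩ := hlow
      obtain ⟨j, hj⟩ := hhigh
      rcases eq_or_ne i j with rfl | hij
      · have heq : f i = m := le_antisymm hi hj
        obtain ⟨j', hj'⟩ := exists_ne i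
        rcases le_total (f j') m with h' | h'
        · exact ⟨j', i, hj', h', heq.ge⟩
        · exact ⟨i, j', fun h => hj' h.symm, heq.le, h'⟩
      · exact ⟨i, j, hij, hi, hj⟩
    obtain ⟨i, j, hij, hfi, hfj⟩ := hpair
    -- intermediate value theorem to find the rotation angle
    have hg0 : (Real.cos 0 • c i + Real.sin 0 • c j) ⬝ᵥ Q *ᵥ
        (Real.cos 0 • c i + Real.sin 0 • c j) = f i := by simp [hf]
    have hgpi : (Real.cos (Real.pi/2) • c i + Real.sin (Real.pi/2) • c j) ⬝ᵥ Q *ᵥ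
        (Real.cos (Real.pi/2) • c i + Real.sin (Real.pi/2) • c j) = f j := by simp [hf]
    have hivt := intermediate_value_Icc (by positivity : (0:ℝ) ≤ Real.pi/2)
      ((cont_quad Q (c i) (c j)).continuousOn)
    obtain ⟨θ, _, hθ⟩ := hivt ⟨hg0.symm ▸ hfi, hgpi.symm ▸ hfj⟩
    have huval0 : (Real.cos θ • c i + Real.sin θ • c j) ⬝ᵥ Q *ᵥ
        (Real.cos θ • c i + Real.sin θ • c j) = m := hθ
    set u : Fin n → ℝ := Real.cos θ • c i + Real.sin θ • c j with hu
    set v : Fin n → ℝ := (-Real.sin θ) • c i + Real.cos θ • c j with hv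
    have huval : u ⬝ᵥ Q *ᵥ u = m := huval0
    have huX : u ∈ X := X.add_mem (X.smul_mem _ (hc i)) (X.smul_mem _ (hc j))
    have hvX : v ∈ X := X.add_mem (X.smul_mem _ (hc i)) (X.smul_mem _ (hc j))
    have hrot : vecMulVec u u + vecMulVec v v = vecMulVec (c i) (c i) + vecMulVec (c j) (c j) :=
      rot_vmv (c i) (c j) θ
    -- reindex: move j to the last slot
    set σ : Equiv.Perm (Fin (r+2)) := Equiv.swap j (Fin.last (r+1)) with hσ
    have hσlast : σ (Fin.last (r+1)) = j := Equiv.swap_apply_right _ _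
    have hσσi : σ (σ i) = i := Equiv.swap_apply_self _ _ _
    have hσine : σ i ≠ Fin.last (r+1) := by
      intro h
      apply hij
      have := congrArg σ h
      rw [hσσi, hσlast] at this
      exact this
    set k₀ : Fin (r+1) := (σ i).castPred hσine with hk₀
    have hk₀cast : Fin.castSucc k₀ = σ i := Fin.castSucc_castPred _ _
    set d : Fin (r+1) → (Fin n → ℝ) :=
      Function.update (fun t => c (σ (Fin.castSucc t))) k₀ v with hd
    have hdX : ∀ t, d t ∈ X := by
      intro t
      rw [hd]
      rcases eq_or_ne t k₀ with rfl | ht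
      · simpa using hvX
      · rw [Function.update_of_ne ht]
        exact hc _
    -- the key sum identity
    have Heq : (∑ t, vecMulVec (d t) (d t)) + vecMulVec u u
        = ∑ w, vecMulVec (c w) (c w) := by
      have hc' : ∑ w, vecMulVec (c w) (c w) = ∑ w, vecMulVec (c (σ w)) (c (σ w)) :=
        (Equiv.sum_comp σ (fun w => vecMulVec (c w) (c w))).symm
      rw [hc']
      conv_rhs => rw [Fin.sum_univ_castSucc]
      rw [hσlast]
      have hsplit : ∀ g : Fin (r+1) → Matrix (Fin n) (Fin n) ℝ,
          ∑ t, g t = g k₀ + ∑ t ∈ Finset.univ.erase k₀, g t := by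
        intro g
        exact (Finset.add_sum_erase _ g (Finset.mem_univ k₀)).symm
      rw [hsplit (fun t => vecMulVec (d t) (d t)),
        hsplit (fun t => vecMulVec (c (σ (Fin.castSucc t))) (c (σ (Fin.castSucc t))))]
      have hdk₀ : d k₀ = v := by rw [hd]; simp
      have hck₀ : c (σ (Fin.castSucc k₀)) = c i := by rw [hk₀cast, hσσi]
      have hrest : ∑ t ∈ Finset.univ.erase k₀, vecMulVec (d t) (d t)
          = ∑ t ∈ Finset.univ.erase k₀,
              vecMulVec (c (σ (Fin.castSucc t))) (c (σ (Fin.castSucc t))) := by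
        refine Finset.sum_congr rfl fun t ht => ?_
        have : t ≠ k₀ := (Finset.mem_erase.mp ht).1
        rw [hd, Function.update_of_ne this]
      rw [hdk₀, hck₀, hrest]
      have hvu : vecMulVec v v + vecMulVec u u
          = vecMulVec (c i) (c i) + vecMulVec (c j) (c j) := by
        rw [← hrot]; abel
      rw [add_right_comm (vecMulVec v v), add_right_comm (vecMulVec (c i) (c i)), hvu]
    -- sum of values of d
    have hdval : ∑ t, (d t) ⬝ᵥ Q *ᵥ (d t) = ((r:ℝ)+1) * m := by
      have h1 := congrArg (fun M => mip M Q) Heq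
      simp only [mip_add_left, mip_sum_left, mip_vecMulVec] at h1
      have h2 : ∑ w, (c w) ⬝ᵥ Q *ᵥ (c w) = T := rfl
      rw [h2, huval, hTm] at h1
      linarith
    obtain ⟨a', ha'X, ha'sum, ha'val⟩ := ih d hdX
    refine ⟨Fin.snoc a' u, ?_, ?_, ?_⟩
    · intro t
      refine Fin.lastCases ?_ ?_ t
      · simpa using huX
      · intro t'
        simpa using ha'X t' 
    · rw [Fin.sum_univ_castSucc]
      simp only [Fin.snoc_castSucc, Fin.snoc_last]
      rw [ha'sum, Heq]
    · intro t
      refine Fin.lastCases ?_ ?_ t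
      · simp only [Fin.snoc_last]
        rw [huval, hm]
        push_cast
        ring_nf
      · intro t'
        simp only [Fin.snoc_castSucc]
        rw [ha'val t', hdval, hm]
        have h1 : ((r:ℝ)+1) ≠ 0 := by positivity
        push_cast
        field_simp
        ring

/-- Any matrix in `S₊(X)` of rank `r` is the sum of `r` rank-one terms with vectors in `X`. -/
private lemma exists_decomp (X : Submodule ℝ (Fin n → ℝ))
    (A : Matrix (Fin n) (Fin n) ℝ) (hA : A ∈ CPset (X : Set (Fin n → ℝ)))
    (r : ℕ) (hr : A.rank = r) :
    ∃ c : Fin r → (Fin n → ℝ), (∀ i, c i ∈ X) ∧ A = ∑ i, vecMulVec (c i) (c i) := by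
  obtain ⟨k, hk, b, hbX, hAb⟩ := hA
  have hherm : A.IsHermitian := by
    rw [Matrix.IsHermitian, hAb]
    ext p q
    simp only [conjTranspose_apply, Matrix.sum_apply, vecMulVec_apply, star_trivial, star_sum]
    exact Finset.sum_congr rfl fun i _ => by simp [mul_comm]
  have hmulVec : ∀ x, A *ᵥ x = ∑ i, ((b i) ⬝ᵥ x) • b i := by
    intro x
    ext p
    rw [hAb]
    simp only [mulVec, dotProduct, Matrix.sum_apply, vecMulVec_apply, Finset.sum_apply,
      Pi.smul_apply, smul_eq_mul, Finset.sum_mul]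
    rw [Finset.sum_comm]
    exact Finset.sum_congr rfl fun i _ => Finset.sum_congr rfl fun q _ => by ring
  have hpsd : A.PosSemidef := by
    refine PosSemidef.of_dotProduct_mulVec_nonneg hherm fun x => ?_
    have hdsum : ∀ (w : Fin k → (Fin n → ℝ)), x ⬝ᵥ (∑ i, w i) = ∑ i, x ⬝ᵥ w i := by
      intro w
      simp only [dotProduct, Finset.sum_apply, Finset.mul_sum]
      exact Finset.sum_comm
    have hsq : (star x) ⬝ᵥ (A *ᵥ x) = ∑ i, ((b i) ⬝ᵥ x)^2 := by
      rw [show (star x) = x from rfl, hmulVec x, hdsum]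
      refine Finset.sum_congr rfl fun i _ => ?_
      rw [dotProduct_smul, smul_eq_mul, sq, dotProduct_comm x (b i)]
    rw [hsq]
    exact Finset.sum_nonneg fun i _ => sq_nonneg _
  have hrange : ∀ x, A *ᵥ x ∈ X := by
    intro x
    rw [hmulVec x]
    exact Submodule.sum_mem X fun i _ => X.smul_mem _ (hbX i)
  have hspec : A = ∑ i, hherm.eigenvalues i •
      vecMulVec (⇑(hherm.eigenvectorBasis i)) (⇑(hherm.eigenvectorBasis i)) := by
    conv_lhs => rw [hherm.spectral_theorem]
    ext p q
    simp only [Unitary.conjStarAlgAut_apply, Matrix.mul_apply, Matrix.sum_apply, diagonal_apply, Matrix.smul_apply,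
      vecMulVec_apply, smul_eq_mul, Matrix.star_apply, star_trivial,
      IsHermitian.eigenvectorUnitary_apply, Function.comp_apply]
    refine Finset.sum_congr rfl fun t _ => ?_
    rw [Finset.sum_eq_single_of_mem t (Finset.mem_univ t) (fun b _ hb => by simp [hb])]
    rw [if_pos rfl]
    simp only [RCLike.ofReal_real_eq_id, id_eq]
    ring
  have hlampos : ∀ i, 0 ≤ hherm.eigenvalues i := fun i => hpsd.eigenvalues_nonneg i
  have huX : ∀ i, hherm.eigenvalues i ≠ 0 → (⇑(hherm.eigenvectorBasis i) : Fin n → ℝ) ∈ X := by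
    intro i hi
    have h1 : A *ᵥ ⇑(hherm.eigenvectorBasis i) = hherm.eigenvalues i • ⇑(hherm.eigenvectorBasis i) :=
      hherm.mulVec_eigenvectorBasis i
    have h2 : (⇑(hherm.eigenvectorBasis i) : Fin n → ℝ)
        = (hherm.eigenvalues i)⁻¹ • (A *ᵥ ⇑(hherm.eigenvectorBasis i)) := by
      rw [h1, smul_smul, inv_mul_cancel₀ hi, one_smul]
    rw [h2]
    exact X.smul_mem _ (hrange _)
  classical
  set s : Finset (Fin n) := Finset.univ.filter (fun i => hherm.eigenvalues i ≠ 0) with hs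
  have hcard : s.card = r := by
    have h1 := hherm.rank_eq_card_non_zero_eigs
    rw [hr] at h1
    rw [hs]
    rw [← Fintype.card_subtype]
    exact h1.symm
  have hAs : A = ∑ i ∈ s, hherm.eigenvalues i •
      vecMulVec (⇑(hherm.eigenvectorBasis i)) (⇑(hherm.eigenvectorBasis i)) := by
    refine hspec.trans ?_
    rw [hs]
    rw [← Finset.sum_filter_add_sum_filter_not Finset.univ (fun i => hherm.eigenvalues i ≠ 0)
      (fun i => hherm.eigenvalues i •
        vecMulVec (⇑(hherm.eigenvectorBasis i)) (⇑(hherm.eigenvectorBasis i)))]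
    have hz : ∑ i ∈ Finset.univ.filter (fun i => ¬ hherm.eigenvalues i ≠ 0),
        hherm.eigenvalues i •
          vecMulVec (⇑(hherm.eigenvectorBasis i)) (⇑(hherm.eigenvectorBasis i)) = 0 := by
      apply Finset.sum_eq_zero
      intro i hi
      simp only [Finset.mem_filter, not_not] at hi
      rw [hi.2, zero_smul]
    rw [hz, add_zero]
  set e := s.equivFinOfCardEq hcard with he
  refine ⟨fun t => Real.sqrt (hherm.eigenvalues (e.symm t)) •
    (⇑(hherm.eigenvectorBasis (e.symm t)) : Fin n → ℝ), ?_, ?_⟩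
  · intro t
    apply X.smul_mem
    exact huX _ (Finset.mem_filter.mp (e.symm t).2).2
  · refine hAs.trans ?_
    rw [← Finset.sum_coe_sort s (fun i => hherm.eigenvalues i •
      vecMulVec (⇑(hherm.eigenvectorBasis i)) (⇑(hherm.eigenvectorBasis i)))]
    rw [← Equiv.sum_comp e.symm
      (fun i : {x // x ∈ s} => hherm.eigenvalues (i : Fin n) •
        vecMulVec (⇑(hherm.eigenvectorBasis (i : Fin n))) (⇑(hherm.eigenvectorBasis (i : Fin n))))]
    refine Finset.sum_congr rfl fun t _ => ?_
    rw [smul_vmv, Real.mul_self_sqrt (hlampos _)]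

end helpers

/-- rank-`r` matrices in `S₊(X)` admit a rank-one decomposition of
length `r` with equal `Q`-values. -/
theorem stmt19 (n : ℕ) (X : Submodule ℝ (Fin n → ℝ))
    (A : Matrix (Fin n) (Fin n) ℝ) (hA : A ∈ CPset (X : Set (Fin n → ℝ)))
    (r : ℕ) (hr1 : 1 ≤ r) (hr : A.rank = r)
    (Q : Matrix (Fin n) (Fin n) ℝ) (hQ : Q.IsSymm) :
    ∃ a : Fin r → (Fin n → ℝ), (∀ i, a i ∈ X) ∧
      A = ∑ i, Matrix.vecMulVec (a i) (a i) ∧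
      ∀ i, (a i) ⬝ᵥ Q.mulVec (a i) = mip A Q / r := by
  obtain ⟨s, rfl⟩ : ∃ s, r = s + 1 := ⟨r - 1, (Nat.succ_pred_eq_of_pos hr1).symm⟩
  obtain ⟨c, hcX, hAc⟩ := exists_decomp X A hA (s+1) hr
  obtain ⟨a, haX, hasum, haval⟩ := equalize X Q s c hcX
  refine ⟨a, haX, by rw [hasum, ← hAc], fun i => ?_⟩
  rw [haval i]
  have : mip A Q = ∑ j, (c j) ⬝ᵥ Q *ᵥ (c j) := by
    rw [hAc, mip_sum_left]
    exact Finset.sum_congr rfl fun j _ => mip_vecMulVec _ _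
  rw [this]
  push_cast
  ring_nf
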